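/- Let Q ≥ 1 be a real number and define d(n, Q) = #{q : 1 ≤ q ≤ Q, q | n} for integers n. Then for any integer B ≥ 1, any ε > 0, and any real X ≥ 1, we have Σ_{|n| ≤ X} d(n, Q)^B ≪_{ε,B} Q^B + Q^ε X. -/

import Mathlib

open Finset
-- submultiplicativity of divisor count
lemma tau_mul_le (m n : ℕ) (hm : m ≠ 0) (hn : n ≠ 0) :
    (m * n).divisors.card ≤ m.divisors.card * n.divisors.card := by
  rw [← Finset.card_product]
  apply Finset.card_le_card_of_injOn (fun d => (Nat.gcd d m, d / Nat.gcd d m))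
  · intro d hd
    rw [Finset.mem_coe, Nat.mem_divisors] at hd
    obtain ⟨hdvd, hmn⟩ := hd
    have hd0 : d ≠ 0 := by rintro rfl; exact hmn (zero_dvd_iff.mp hdvd)
    have hg0 : Nat.gcd d m ≠ 0 := Nat.gcd_ne_zero_left hd0
    simp only [Finset.mem_coe, Finset.mem_product, Nat.mem_divisors]
    refine ⟨⟨Nat.gcd_dvd_right d m, hm⟩, ?_, hn⟩
    have hcop : Nat.Coprime (d / Nat.gcd d m) (m / Nat.gcd d m) :=
      Nat.coprime_div_gcd_div_gcd (Nat.pos_of_ne_zero hg0)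
    -- d / g ∣ (m / g) * n
    have h1 : d / Nat.gcd d m ∣ (m / Nat.gcd d m) * n := by
      have : d ∣ m * n := hdvd
      have h2 : (d / Nat.gcd d m) * Nat.gcd d m ∣ (m / Nat.gcd d m) * Nat.gcd d m * n := by
        rw [Nat.div_mul_cancel (Nat.gcd_dvd_left d m), Nat.div_mul_cancel (Nat.gcd_dvd_right d m)]
        exact hdvd
      rw [mul_assoc, mul_comm (Nat.gcd d m) n, ← mul_assoc] at h2
      exact (Nat.mul_dvd_mul_iff_right (Nat.pos_of_ne_zero hg0)).mp h2
    exact hcop.dvd_of_dvd_mul_left h1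
  · intro a ha b hb hab
    have h1 := congrArg Prod.fst hab
    have h2 := congrArg Prod.snd hab
    simp only at h1 h2
    calc a = Nat.gcd a m * (a / Nat.gcd a m) := (Nat.mul_div_cancel' (Nat.gcd_dvd_left a m)).symm
      _ = Nat.gcd b m * (b / Nat.gcd b m) := by rw [h2, h1]
      _ = b := Nat.mul_div_cancel' (Nat.gcd_dvd_left b m)

lemma card_antidiag (n : ℕ) : n.divisorsAntidiagonal.card = n.divisors.card := by
  rw [← Nat.image_fst_divisorsAntidiagonal]
  refine (Finset.card_image_of_injOn ?_).symm
  intro p hp q hq h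
  simp only [Finset.mem_coe, Nat.mem_divisorsAntidiagonal] at hp hq
  have h1 : p.1 ≠ 0 := by rintro h0; exact hp.2 (by rw [← hp.1, h0, zero_mul])
  have h2 : p.2 = q.2 := by
    refine Nat.eq_of_mul_eq_mul_left (Nat.pos_of_ne_zero h1) ?_
    rw [hp.1, h]; exact hq.1.symm
  exact Prod.ext h h2

lemma tau_pow_sum_le (N : ℕ) (hN : 1 ≤ N) : ∀ k : ℕ,
    ∑ L ∈ Finset.Icc 1 N, ((L.divisors.card : ℝ)) ^ k / L ≤ (1 + Real.log N) ^ (2 ^ k) := by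
  have hlog : (0:ℝ) ≤ Real.log N := Real.log_nonneg (by exact_mod_cast hN)
  intro k
  induction k with
  | zero =>
    simp only [pow_zero, pow_one]
    have := harmonic_le_one_add_log N
    calc ∑ L ∈ Finset.Icc 1 N, (1:ℝ) / L = ((harmonic N : ℚ) : ℝ) := by
          rw [harmonic_eq_sum_Icc]; push_cast; simp [one_div]
      _ ≤ 1 + Real.log N := by exact_mod_cast this
  | succ k ih =>
    have key : ∑ L ∈ Finset.Icc 1 N, ((L.divisors.card : ℝ)) ^ (k+1) / L ≤
        ∑ L ∈ Finset.Icc 1 N, ∑ p ∈ L.divisorsAntidiagonal,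
          ((p.1.divisors.card : ℝ)) ^ k / p.1 * (((p.2.divisors.card : ℝ)) ^ k / p.2) := by
      apply Finset.sum_le_sum
      intro L hL
      rw [Finset.mem_Icc] at hL
      have hL0 : L ≠ 0 := by omega
      have hcard : ((L.divisors.card : ℝ)) ^ (k+1) / L =
          ∑ _p ∈ L.divisorsAntidiagonal, ((L.divisors.card : ℝ)) ^ k / L := by
        rw [Finset.sum_const, card_antidiag, nsmul_eq_mul, pow_succ]
        ring
      rw [hcard]
      apply Finset.sum_le_sum
      intro p hp
      rw [Nat.mem_divisorsAntidiagonal] at hp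
      have hp1 : p.1 ≠ 0 := by rintro h0; exact hp.2 (by rw [← hp.1, h0, zero_mul])
      have hp2 : p.2 ≠ 0 := by rintro h0; exact hp.2 (by rw [← hp.1, h0, mul_zero])
      have htau : (L.divisors.card : ℝ) ≤ (p.1.divisors.card : ℝ) * (p.2.divisors.card : ℝ) := by
        rw [← hp.1]; exact_mod_cast tau_mul_le p.1 p.2 hp1 hp2
      rw [div_mul_div_comm, ← Nat.cast_mul, hp.1, ← mul_pow]
      apply div_le_div_of_nonneg_right ?_ (by positivity)
      exact pow_le_pow_left₀ (by positivity) htau k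
    -- now bound the double sum by the product box
    have hdisj : (Finset.Icc 1 N : Set ℕ).PairwiseDisjoint Nat.divisorsAntidiagonal := by
      intro a _ b _ hab
      apply Finset.disjoint_left.mpr
      intro p hpa hpb
      rw [Nat.mem_divisorsAntidiagonal] at hpa hpb
      exact hab (hpa.1.symm.trans hpb.1)
    set g : ℕ × ℕ → ℝ := fun p =>
      ((p.1.divisors.card : ℝ)) ^ k / p.1 * (((p.2.divisors.card : ℝ)) ^ k / p.2) with hg
    have hsub : (Finset.Icc 1 N).biUnion Nat.divisorsAntidiagonal ⊆
        Finset.Icc 1 N ×ˢ Finset.Icc 1 N := by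
      intro p hp
      rw [Finset.mem_biUnion] at hp
      obtain ⟨L, hL, hpL⟩ := hp
      rw [Finset.mem_Icc] at hL
      rw [Nat.mem_divisorsAntidiagonal] at hpL
      have hp1 : p.1 ≠ 0 := by rintro h0; exact hpL.2 (by rw [← hpL.1, h0, zero_mul])
      have hp2 : p.2 ≠ 0 := by rintro h0; exact hpL.2 (by rw [← hpL.1, h0, mul_zero])
      rw [Finset.mem_product, Finset.mem_Icc, Finset.mem_Icc]
      have h1 : p.1 ≤ N := le_trans (Nat.le_of_dvd (by omega) ⟨p.2, hpL.1.symm⟩) hL.2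
      have h2 : p.2 ≤ N := le_trans (Nat.le_of_dvd (by omega) ⟨p.1, by rw [mul_comm]; exact hpL.1.symm⟩) hL.2
      exact ⟨⟨Nat.pos_of_ne_zero hp1, h1⟩, ⟨Nat.pos_of_ne_zero hp2, h2⟩⟩
    have hbox : ∑ L ∈ Finset.Icc 1 N, ∑ p ∈ L.divisorsAntidiagonal, g p ≤
        ∑ p ∈ Finset.Icc 1 N ×ˢ Finset.Icc 1 N, g p := by
      rw [← Finset.sum_biUnion hdisj]
      apply Finset.sum_le_sum_of_subset_of_nonneg hsub
      intro p _ _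
      positivity
    have hprod : ∑ p ∈ Finset.Icc 1 N ×ˢ Finset.Icc 1 N, g p =
        (∑ L ∈ Finset.Icc 1 N, ((L.divisors.card : ℝ)) ^ k / L) ^ 2 := by
      rw [Finset.sum_product, sq, Finset.sum_mul_sum]
    have hnn : (0:ℝ) ≤ ∑ L ∈ Finset.Icc 1 N, ((L.divisors.card : ℝ)) ^ k / L := by
      apply Finset.sum_nonneg; intro i _; positivity
    calc ∑ L ∈ Finset.Icc 1 N, ((L.divisors.card : ℝ)) ^ (k+1) / L
        ≤ (∑ L ∈ Finset.Icc 1 N, ((L.divisors.card : ℝ)) ^ k / L) ^ 2 := by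
          rw [← hprod]; exact le_trans key hbox
      _ ≤ ((1 + Real.log N) ^ (2 ^ k)) ^ 2 := by
          exact pow_le_pow_left₀ hnn ih 2
      _ = (1 + Real.log N) ^ (2 ^ (k+1)) := by
          rw [← pow_mul]; ring_nf

lemma count_multiples (M L : ℤ) (hM : 0 ≤ M) (hL : 0 < L) :
    (((Finset.Icc (-M) M).filter (fun n => L ∣ n)).card : ℝ) ≤ 2 * (M:ℝ)/(L:ℝ) + 2 := by
  have hLR : (0:ℝ) < (L:ℝ) := by exact_mod_cast hL
  have hcard : ((Finset.Icc (-M) M).filter (fun n => L ∣ n)).card ≤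
      (Finset.Icc ((-M)/L) (M/L)).card := by
    apply Finset.card_le_card_of_injOn (fun n => n / L)
    · intro n hn
      rw [Finset.mem_coe, Finset.mem_filter, Finset.mem_Icc] at hn
      rw [Finset.mem_coe, Finset.mem_Icc]
      exact ⟨Int.ediv_le_ediv hL hn.1.1, Int.ediv_le_ediv hL hn.1.2⟩
    · intro a ha b hb hab
      rw [Finset.coe_filter, Set.mem_setOf_eq] at ha hb
      have ha' : a / L * L = a := Int.ediv_mul_cancel ha.2
      have hb' : b / L * L = b := Int.ediv_mul_cancel hb.2
      simp only at hab
      rw [← ha', ← hb', hab]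
  set q1 := M / L with hq1
  set q2 := (-M) / L with hq2
  have hd1 := Int.mul_ediv_add_emod M L
  have hd2 := Int.mul_ediv_add_emod (-M) L
  have hr1 : 0 ≤ M % L := Int.emod_nonneg M (ne_of_gt hL)
  have hr2 : 0 ≤ (-M) % L := Int.emod_nonneg (-M) (ne_of_gt hL)
  have hr2' : (-M) % L < L := Int.emod_lt_of_pos (-M) hL
  -- L * q1 ≤ M  and  -M - L < L * q2
  have h1 : L * q1 ≤ M := by linarith
  have h2 : -M - L < L * q2 := by linarith
  have h1R : (q1:ℝ) ≤ (M:ℝ)/(L:ℝ) := by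
    rw [le_div_iff₀ hLR]
    have : (L:ℝ) * (q1:ℝ) ≤ (M:ℝ) := by exact_mod_cast h1
    linarith
  have h2R : -((q2:ℝ)) ≤ (M:ℝ)/(L:ℝ) + 1 := by
    have h2' : (-(M:ℝ)) - L < (L:ℝ) * q2 := by exact_mod_cast h2
    rw [show (M:ℝ)/(L:ℝ) + 1 = ((M:ℝ) + L)/(L:ℝ) by rw [add_div, div_self (ne_of_gt hLR)], le_div_iff₀ hLR]
    linarith
  have hq21 : q2 ≤ q1 := Int.ediv_le_ediv hL (by linarith)
  have hcard2 : ((Finset.Icc q2 q1).card : ℝ) = (q1:ℝ) - q2 + 1 := by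
    rw [Int.card_Icc]
    have hnn : 0 ≤ q1 + 1 - q2 := by omega
    rw [show (((q1 + 1 - q2).toNat : ℕ) : ℝ) = (((q1 + 1 - q2).toNat : ℤ) : ℝ) from by push_cast; ring,
      Int.toNat_of_nonneg hnn]
    push_cast
    ring
  calc (((Finset.Icc (-M) M).filter (fun n => L ∣ n)).card : ℝ)
      ≤ ((Finset.Icc q2 q1).card : ℝ) := by exact_mod_cast hcard
    _ = (q1:ℝ) - q2 + 1 := hcard2
    _ ≤ 2 * (M:ℝ)/(L:ℝ) + 2 := by
        have : 2*(M:ℝ)/(L:ℝ) = (M:ℝ)/(L:ℝ) + (M:ℝ)/(L:ℝ) := by ring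
        linarith

/-- `d(n, Q)` is the number of positive integers `q ≤ Q` dividing `n`. -/
noncomputable def restrictedDivisorCount (n : ℤ) (Q : ℝ) : ℕ :=
  ((Finset.Icc 1 ⌊Q⌋₊).filter (fun q : ℕ => (q : ℤ) ∣ n)).card

/-- Bourgain's divisor moment bound: `∑_{|n| ≤ X} d(n,Q)^B ≪_{ε,B} Q^B + Q^ε X`. -/
theorem divisor_moment_bound :
    ∀ B : ℕ, 1 ≤ B → ∀ ε : ℝ, 0 < ε → ∃ C : ℝ, 0 < C ∧
      ∀ Q X : ℝ, 1 ≤ Q → 1 ≤ X →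
        (∑ n ∈ Finset.Icc (-⌊X⌋) ⌊X⌋, ((restrictedDivisorCount n Q : ℝ)) ^ B) ≤
          C * (Q ^ B + Q ^ ε * X) := by
  intro B hB ε hε
  classical
  set δ : ℝ := ε / 2 ^ B with hδdef
  have hδ : 0 < δ := by positivity
  set C1 : ℝ := (1 + (B : ℝ) / δ) ^ (2 ^ B) with hC1def
  have hC1 : 0 < C1 := by positivity
  refine ⟨2 + 2 * C1, by positivity, ?_⟩
  intro Q X hQ hX
  have hQ0 : (0:ℝ) < Q := by linarith
  set q0 := ⌊Q⌋₊ with hq0def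
  have hq0 : 1 ≤ q0 := Nat.le_floor (by exact_mod_cast hQ)
  have hq0Q : (q0:ℝ) ≤ Q := Nat.floor_le (by linarith)
  set M := ⌊X⌋ with hMdef
  have hM1 : (1:ℤ) ≤ M := Int.le_floor.mpr (by exact_mod_cast hX)
  have hMX : ((M:ℤ):ℝ) ≤ X := Int.floor_le X
  set T := Fintype.piFinset (fun _ : Fin B => Finset.Icc 1 q0) with hT
  have hTcard : T.card = q0 ^ B := by
    rw [hT, Fintype.card_piFinset_const, Nat.card_Icc]
    simp
  -- Step 1: expand the power as a sum over tuples and swap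
  have e1 : ∀ n : ℤ, ((restrictedDivisorCount n Q : ℝ)) ^ B =
      ∑ t ∈ T, (if ∀ i, ((t i : ℤ) ∣ n) then (1:ℝ) else 0) := by
    intro n
    have hpi : T.filter (fun t => ∀ i, ((t i : ℤ) ∣ n)) =
        Fintype.piFinset (fun _ : Fin B => (Finset.Icc 1 q0).filter (fun q : ℕ => (q:ℤ) ∣ n)) := by
      ext t
      simp [hT, Fintype.mem_piFinset, forall_and]
    rw [Finset.sum_boole, hpi, Fintype.card_piFinset_const, restrictedDivisorCount]
    push_cast
    ring
  have step1 : (∑ n ∈ Finset.Icc (-M) M, ((restrictedDivisorCount n Q : ℝ)) ^ B) =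
      ∑ t ∈ T, (((Finset.Icc (-M) M).filter (fun n => ∀ i, ((t i : ℤ) ∣ n))).card : ℝ) := by
    simp_rw [e1]
    rw [Finset.sum_comm]
    refine Finset.sum_congr rfl fun t _ => ?_
    rw [Finset.sum_boole]
  -- lcm facts
  have ht1 : ∀ t ∈ T, ∀ i, 1 ≤ t i := by
    intro t ht i
    rw [hT, Fintype.mem_piFinset] at ht
    exact (Finset.mem_Icc.mp (ht i)).1
  have htq0 : ∀ t ∈ T, ∀ i, t i ≤ q0 := by
    intro t ht i
    rw [hT, Fintype.mem_piFinset] at ht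
    exact (Finset.mem_Icc.mp (ht i)).2
  have lcm_pos : ∀ t ∈ T, 0 < Finset.univ.lcm t := by
    intro t ht
    rcases Nat.eq_zero_or_pos (Finset.univ.lcm t) with h | h
    · rw [Finset.lcm_eq_zero_iff] at h
      obtain ⟨i, _, hi⟩ := h
      have := ht1 t ht i
      omega
    · exact h
  have lcm_le : ∀ t ∈ T, Finset.univ.lcm t ≤ q0 ^ B := by
    intro t ht
    have hdvd : Finset.univ.lcm t ∣ ∏ i, t i :=
      Finset.lcm_dvd fun i _ => Finset.dvd_prod_of_mem t (Finset.mem_univ i)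
    have hprodpos : 0 < ∏ i, t i :=
      Finset.prod_pos fun i _ => ht1 t ht i
    refine le_trans (Nat.le_of_dvd hprodpos hdvd) ?_
    calc ∏ i, t i ≤ ∏ _i : Fin B, q0 := Finset.prod_le_prod' fun i _ => htq0 t ht i
      _ = q0 ^ B := by rw [Finset.prod_const, Finset.card_univ, Fintype.card_fin]
  -- Step 2: count multiples of the lcm
  have step2 : ∀ t ∈ T, (((Finset.Icc (-M) M).filter (fun n => ∀ i, ((t i : ℤ) ∣ n))).card : ℝ)
      ≤ 2 * X / ((Finset.univ.lcm t : ℕ) : ℝ) + 2 := by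
    intro t ht
    have hfil : (Finset.Icc (-M) M).filter (fun n => ∀ i, ((t i : ℤ) ∣ n)) =
        (Finset.Icc (-M) M).filter (fun n => (((Finset.univ.lcm t : ℕ) : ℤ) ∣ n)) := by
      apply Finset.filter_congr
      intro n _
      simp only [Int.natCast_dvd, Finset.lcm_dvd_iff, Finset.mem_univ, forall_true_left]
    rw [hfil]
    have hLpos : (0:ℤ) < ((Finset.univ.lcm t : ℕ) : ℤ) := by exact_mod_cast lcm_pos t ht
    have h := count_multiples M ((Finset.univ.lcm t : ℕ) : ℤ) (by omega) hLpos
    refine h.trans ?_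
    have hLR : (0:ℝ) < ((Finset.univ.lcm t : ℕ) : ℝ) := by exact_mod_cast lcm_pos t ht
    have hcast : ((((Finset.univ.lcm t : ℕ) : ℤ)) : ℝ) = ((Finset.univ.lcm t : ℕ) : ℝ) := by
      push_cast; ring
    rw [hcast]
    have hM0 : (0:ℝ) ≤ (M:ℝ) := by exact_mod_cast (by omega : (0:ℤ) ≤ M)
    gcongr
  -- Step 3: sum of 1/lcm over tuples
  have step3 : ∑ t ∈ T, (1:ℝ) / ((Finset.univ.lcm t : ℕ) : ℝ) ≤
      ∑ L ∈ Finset.Icc 1 (q0 ^ B), ((L.divisors.card : ℝ)) ^ B / L := by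
    have hmaps : ∀ t ∈ T, Finset.univ.lcm t ∈ Finset.Icc 1 (q0 ^ B) := fun t ht =>
      Finset.mem_Icc.mpr ⟨lcm_pos t ht, lcm_le t ht⟩
    rw [← Finset.sum_fiberwise_of_maps_to hmaps]
    apply Finset.sum_le_sum
    intro L hL
    rw [Finset.mem_Icc] at hL
    have hLR : (0:ℝ) < (L:ℝ) := by exact_mod_cast hL.1
    have heq : ∑ t ∈ T.filter (fun t => Finset.univ.lcm t = L), (1:ℝ)/((Finset.univ.lcm t : ℕ) : ℝ)
        = ((T.filter (fun t => Finset.univ.lcm t = L)).card : ℝ) * (1/(L:ℝ)) := by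
      rw [Finset.sum_congr rfl (fun t ht => by rw [(Finset.mem_filter.mp ht).2]),
        Finset.sum_const, nsmul_eq_mul]
    rw [heq]
    have hsub : T.filter (fun t => Finset.univ.lcm t = L) ⊆
        Fintype.piFinset (fun _ : Fin B => L.divisors) := by
      intro t ht
      rw [Finset.mem_filter] at ht
      rw [Fintype.mem_piFinset]
      intro i
      rw [Nat.mem_divisors]
      exact ⟨ht.2 ▸ Finset.dvd_lcm (Finset.mem_univ i), by omega⟩
    have hcard := Finset.card_le_card hsub
    rw [Fintype.card_piFinset_const] at hcard
    calc ((T.filter (fun t => Finset.univ.lcm t = L)).card : ℝ) * (1/(L:ℝ))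
        ≤ ((L.divisors.card : ℝ)) ^ B * (1/(L:ℝ)) := by
          gcongr
          exact_mod_cast hcard
      _ = ((L.divisors.card : ℝ)) ^ B / L := by ring
  -- Step 4: the divisor sum bound
  have hq0B : 1 ≤ q0 ^ B := Nat.one_le_pow _ _ (by omega)
  have step4 := tau_pow_sum_le (q0 ^ B) hq0B B
  -- Step 5: log bound
  have hlogQ : 0 ≤ Real.log Q := Real.log_nonneg hQ
  have step5 : (1 + Real.log ((q0 ^ B : ℕ) : ℝ)) ^ (2 ^ B) ≤ C1 * Q ^ ε := by
    have h1 : Real.log ((q0 ^ B : ℕ) : ℝ) ≤ (B:ℝ) * Real.log Q := by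
      push_cast
      rw [Real.log_pow]
      gcongr
    have hlognn : 0 ≤ Real.log ((q0 ^ B : ℕ) : ℝ) := Real.log_nonneg (by exact_mod_cast hq0B)
    have hrpow1 : 1 ≤ Q ^ δ := Real.one_le_rpow hQ (le_of_lt hδ)
    have h2 : Real.log Q ≤ Q ^ δ / δ := Real.log_le_rpow_div (le_of_lt hQ0) hδ
    have h3 : 1 + Real.log ((q0 ^ B : ℕ) : ℝ) ≤ (1 + (B:ℝ)/δ) * Q ^ δ := by
      have hmain : (B:ℝ) * Real.log Q ≤ ((B:ℝ)/δ) * Q ^ δ := by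
        rw [div_mul_eq_mul_div]
        calc (B:ℝ) * Real.log Q ≤ (B:ℝ) * (Q ^ δ / δ) := by
              apply mul_le_mul_of_nonneg_left h2 (by positivity)
          _ = (B:ℝ) * Q ^ δ / δ := by ring
      calc 1 + Real.log ((q0 ^ B : ℕ) : ℝ) ≤ 1 + (B:ℝ) * Real.log Q := by linarith
        _ ≤ Q ^ δ + ((B:ℝ)/δ) * Q ^ δ := by
            have h4 : (0:ℝ) ≤ (B:ℝ)/δ := by positivity
            linarith
        _ = (1 + (B:ℝ)/δ) * Q ^ δ := by ring
    calc (1 + Real.log ((q0 ^ B : ℕ) : ℝ)) ^ (2 ^ B)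
        ≤ ((1 + (B:ℝ)/δ) * Q ^ δ) ^ (2 ^ B) := by
          apply pow_le_pow_left₀ (by linarith) h3
      _ = C1 * (Q ^ δ) ^ (2 ^ B : ℕ) := by rw [mul_pow, hC1def]
      _ = C1 * Q ^ ε := by
          rw [← Real.rpow_natCast (Q ^ δ) (2 ^ B), ← Real.rpow_mul (le_of_lt hQ0)]
          congr 1
          rw [hδdef]
          push_cast
          field_simp
  -- Assemble
  have hSfinal : ∑ t ∈ T, (1:ℝ) / ((Finset.univ.lcm t : ℕ) : ℝ) ≤ C1 * Q ^ ε :=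
    le_trans step3 (le_trans step4 step5)
  have hXpos : (0:ℝ) < X := by linarith
  have hQe : (0:ℝ) ≤ Q ^ ε := Real.rpow_nonneg (le_of_lt hQ0) ε
  have hq0BQ : ((q0 ^ B : ℕ) : ℝ) ≤ Q ^ B := by
    push_cast
    exact pow_le_pow_left₀ (by positivity) hq0Q B
  have hQB : (0:ℝ) ≤ Q ^ B := by positivity
  calc (∑ n ∈ Finset.Icc (-M) M, ((restrictedDivisorCount n Q : ℝ)) ^ B)
      = ∑ t ∈ T, (((Finset.Icc (-M) M).filter (fun n => ∀ i, ((t i : ℤ) ∣ n))).card : ℝ) := step1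
    _ ≤ ∑ t ∈ T, (2 * X / ((Finset.univ.lcm t : ℕ) : ℝ) + 2) := Finset.sum_le_sum step2
    _ = 2 * X * (∑ t ∈ T, (1:ℝ) / ((Finset.univ.lcm t : ℕ) : ℝ)) + 2 * ((q0 ^ B : ℕ) : ℝ) := by
        rw [Finset.sum_add_distrib, Finset.sum_const, ← hTcard]
        rw [Finset.mul_sum]
        congr 1
        · refine Finset.sum_congr rfl fun t _ => ?_
          ring
        · rw [nsmul_eq_mul]; ring
    _ ≤ 2 * X * (C1 * Q ^ ε) + 2 * Q ^ B := by
        have h5 : 2 * X * (∑ t ∈ T, (1:ℝ) / ((Finset.univ.lcm t : ℕ) : ℝ)) ≤ 2 * X * (C1 * Q ^ ε) := by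
          apply mul_le_mul_of_nonneg_left hSfinal (by linarith)
        linarith
    _ ≤ (2 + 2 * C1) * (Q ^ B + Q ^ ε * X) := by nlinarith [mul_nonneg hQe (le_of_lt hXpos)]
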